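/- Let S, T, U, C be finsets of ι with C ⊆ U, and let b ∈ ι with b ∉ U and b ∉ S ∪ T. Then (m_S * F_U) * (m_T * F_{C ∪ {b}}) = m_{S ∪ T ∪ {b}} * F_U + m_{S ∪ T ∪ {b}} * F_C + m_{S ∪ T} * F_C in R (the semantic identity underlying multiplication rule 22 of the Multiplication Rewriting Principle, where V = (U ∩ V) ∪ {b} with U ∩ V = C). -/
import Mathlib


variable {ι : Type*} [DecidableEq ι]

/-- Monomial semantics: `m S` evaluates an assignment `a` to `∏ i ∈ S, a i`. -/
def m (S : Finset ι) : (ι → ZMod 2) → ZMod 2 :=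
  fun a => ∏ i ∈ S, a i

/-- Power-set sum semantics: `F U` evaluates `a` to the sum over nonempty subsets `A ⊆ U`
of `∏ i ∈ A, a i`. -/
def F (U : Finset ι) : (ι → ZMod 2) → ZMod 2 :=
  fun a => ∑ A ∈ U.powerset.erase ∅, ∏ i ∈ A, a i

lemma prod_idem (A : Finset ι) (a : ι → ZMod 2) :
    (∏ i ∈ A, a i) * ∏ i ∈ A, a i = ∏ i ∈ A, a i := by
  rw [← Finset.prod_mul_distrib]
  have h : ∀ z : ZMod 2, z * z = z := by decide
  exact Finset.prod_congr rfl fun i _ => h (a i)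

lemma m_mul (S T : Finset ι) (a : ι → ZMod 2) : m S a * m T a = m (S ∪ T) a := by
  unfold m
  rw [← Finset.prod_union_inter]
  have h : S ∩ T ⊆ S ∪ T := (Finset.inter_subset_left).trans Finset.subset_union_left
  rw [← Finset.prod_sdiff h, mul_assoc, prod_idem]

lemma F_eq (U : Finset ι) (a : ι → ZMod 2) : F U a = 1 + ∏ i ∈ U, (1 + a i) := by
  have h1 : ∏ i ∈ U, (a i + 1) = ∑ t ∈ U.powerset, ∏ i ∈ t, a i := by
    rw [Finset.prod_add]
    exact Finset.sum_congr rfl fun t _ => by simp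
  have h2 : (∏ i ∈ (∅ : Finset ι), a i) + ∑ A ∈ U.powerset.erase ∅, ∏ i ∈ A, a i
      = ∑ A ∈ U.powerset, ∏ i ∈ A, a i :=
    Finset.add_sum_erase _ (fun A => ∏ i ∈ A, a i) (Finset.empty_mem_powerset U)
  simp only [Finset.prod_empty] at h2
  have h3 : F U a = (∑ t ∈ U.powerset, ∏ i ∈ t, a i) - 1 := by
    unfold F; rw [← h2]; ring
  have h4 : ∀ z : ZMod 2, z - 1 = 1 + z := by decide
  rw [h3, ← h1, h4]
  congr 1
  exact Finset.prod_congr rfl fun i _ => by ring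

theorem stmt17 (S T U C : Finset ι) (b : ι)
    (hCU : C ⊆ U) (hbU : b ∉ U) (hbST : b ∉ S ∪ T) :
    (m S * F U) * (m T * F (C ∪ {b}))
      = m (S ∪ T ∪ {b}) * F U + m (S ∪ T ∪ {b}) * F C + m (S ∪ T) * F C := by
  funext a
  have hbC : b ∉ C := fun h => hbU (hCU h)
  have hU : (∏ i ∈ U \ C, (1 + a i)) * ∏ i ∈ C, (1 + a i) = ∏ i ∈ U, (1 + a i) :=
    Finset.prod_sdiff hCU
  have hCb : (∏ i ∈ C ∪ {b}, (1 + a i)) = (1 + a b) * ∏ i ∈ C, (1 + a i) := by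
    rw [Finset.union_comm, ← Finset.insert_eq, Finset.prod_insert hbC]
  have hm : m (S ∪ T ∪ {b}) a = a b * m (S ∪ T) a := by
    unfold m
    rw [Finset.union_comm _ {b}, ← Finset.insert_eq, Finset.prod_insert hbST]
  have hs := m_mul S T a
  simp only [Pi.mul_apply, Pi.add_apply, F_eq, hCb, hm, ← hU]
  generalize m S a = s1 at hs ⊢
  generalize m T a = s2 at hs ⊢
  generalize m (S ∪ T) a = s at hs ⊢
  generalize a b = x
  generalize (∏ i ∈ C, (1 + a i)) = p
  generalize (∏ i ∈ U \ C, (1 + a i)) = q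
  revert hs
  revert s1 s2 s x p q
  decide
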